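/- Let λ = (n−k+1, 1^k) be a hook partition of n. Then sum_{T ∈ SYT(λ)} q^{maj(T)} = q^{binomial(k+1,2)} · binomial(n, k)_q, where binomial(n,k)_q is the q-binomial coefficient. -/

import Mathlib

open Finset Polynomial

/-- The hook length of a cell `c` in the partition (Young diagram) `μ`: the number of
cells weakly to the right of `c` in its row plus the number strictly below in its
column. -/
def hookLen (μ : YoungDiagram) (c : ℕ × ℕ) : ℕ :=
  (μ.cells.filter (fun x => x.1 = c.1 ∧ c.2 ≤ x.2)).card +
    (μ.cells.filter (fun x => x.2 = c.2 ∧ c.1 < x.1)).card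

/-- A standard Young tableau of shape `μ`: a bijective filling of the cells of `μ` by
`1, …, n` strictly increasing along rows (left to right) and down columns. -/
abbrev SYT (μ : YoungDiagram) : Type :=
  {T : μ.cells → (Finset.Icc 1 μ.cells.card : Finset ℕ) //
    Function.Bijective T ∧
      ∀ c c' : μ.cells,
        (((c : ℕ × ℕ).1 = (c' : ℕ × ℕ).1 ∧ (c : ℕ × ℕ).2 < (c' : ℕ × ℕ).2) ∨
          ((c : ℕ × ℕ).2 = (c' : ℕ × ℕ).2 ∧ (c : ℕ × ℕ).1 < (c' : ℕ × ℕ).1)) →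
          (T c : ℕ) < (T c' : ℕ)}

noncomputable instance (μ : YoungDiagram) : Fintype (SYT μ) := Fintype.ofFinite _

open scoped Classical in
/-- The major index of a standard Young tableau: the sum of all labels `i` such that
`i + 1` lies in a strictly lower row than `i`. -/
noncomputable def maj {μ : YoungDiagram} (T : SYT μ) : ℕ :=
  ∑ i ∈ (Finset.Icc 1 (μ.cells.card - 1)).filter
      (fun i => ∃ c c' : μ.cells, (T.1 c : ℕ) = i ∧ (T.1 c' : ℕ) = i + 1 ∧
        (c : ℕ × ℕ).1 < (c' : ℕ × ℕ).1), i

/-- The `q`-integer `[n]_q = 1 + q + ⋯ + q^{n-1}` as a polynomial over `ℚ`. -/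
noncomputable def qInt (n : ℕ) : Polynomial ℚ := ∑ i ∈ Finset.range n, Polynomial.X ^ i

/-- The `q`-factorial `[n]_q! = [n]_q [n-1]_q ⋯ [1]_q`. -/
noncomputable def qFact (n : ℕ) : Polynomial ℚ := ∏ k ∈ Finset.range n, qInt (k + 1)

/-- `rank(λ) = ∑_i (i-1) λ_i`, i.e. the sum of the (0-indexed) row numbers of the
cells of `λ`. -/
def diagramRank (μ : YoungDiagram) : ℕ := ∑ c ∈ μ.cells, c.1


section auxmu

lemma mu_mem {n k : ℕ} {μ : YoungDiagram}
    (hμ : μ.rowLens = (n - k + 1) :: List.replicate k 1) :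
    ∀ i j : ℕ, (i, j) ∈ μ ↔ (i = 0 ∧ j < n - k + 1) ∨ (1 ≤ i ∧ i ≤ k ∧ j = 0) := by
  have hlen : μ.colLen 0 = k + 1 := by
    rw [← YoungDiagram.length_rowLens, hμ]; simp
  intro i j
  rw [YoungDiagram.mem_iff_lt_rowLen]
  rcases Nat.lt_or_ge i (k + 1) with hi | hi
  · have hi' : i < μ.rowLens.length := by rw [hμ]; simpa using hi
    have hr : μ.rowLen i = ((n - k + 1) :: List.replicate k 1)[i]'(by rw [← hμ]; exact hi') := by
      rw [← YoungDiagram.get_rowLens (h := hi')]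
      congr 1
    match i with
    | 0 => simp at hr; rw [hr]; omega
    | (i+1) =>
      have : ((n - k + 1) :: List.replicate k 1)[i+1]'(by rw [← hμ]; exact hi') = 1 := by
        simp
      rw [hr, this]
      omega
  · have h0 : μ.rowLen i = 0 := by
      by_contra h
      have : (i, 0) ∈ μ := YoungDiagram.mem_iff_lt_rowLen.2 (Nat.pos_of_ne_zero h)
      rw [YoungDiagram.mem_iff_lt_colLen, hlen] at this
      omega
    rw [h0]
    omega

lemma mu_cells {n k : ℕ} {μ : YoungDiagram} (hkn : k ≤ n)
    (hμ : μ.rowLens = (n - k + 1) :: List.replicate k 1) :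
    μ.cells = ({0} : Finset ℕ) ×ˢ Finset.range (n - k + 1) ∪ (Finset.Icc 1 k) ×ˢ ({0} : Finset ℕ) := by
  ext ⟨i, j⟩
  rw [YoungDiagram.mem_cells, mu_mem hμ]
  simp only [Finset.mem_union, Finset.mem_product, Finset.mem_singleton, Finset.mem_range,
    Finset.mem_Icc]
  omega

lemma mu_card {n k : ℕ} {μ : YoungDiagram} (hkn : k ≤ n)
    (hμ : μ.rowLens = (n - k + 1) :: List.replicate k 1) :
    μ.cells.card = n + 1 := by
  rw [mu_cells hkn hμ, Finset.card_union_of_disjoint]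
  · simp [Nat.card_Icc]; omega
  · rw [Finset.disjoint_left]
    rintro ⟨i, j⟩ h1 h2
    simp at h1 h2
    omega

end auxmu

lemma qFact_succ (n : ℕ) : qFact (n + 1) = qFact n * qInt (n + 1) := by
  rw [qFact, qFact, Finset.prod_range_succ]

lemma qInt_add (a b : ℕ) : qInt (a + b) = qInt a + X ^ a * qInt b := by
  simp [qInt, Finset.sum_range_add, Finset.mul_sum, pow_add]

lemma qshift (n k : ℕ) (h : k ≤ n) :
    (Polynomial.X : Polynomial ℚ) ^ k * qInt (n - k) + X ^ n * qInt k = X ^ k * qInt n := by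
  have e : qInt n = qInt (n - k) + X ^ (n - k) * qInt k := by
    conv_lhs => rw [show n = (n - k) + k by omega]
    exact qInt_add _ _
  rw [e, mul_add, ← mul_assoc, ← pow_add, show k + (n - k) = n by omega]

lemma key_identity : ∀ n k : ℕ, k ≤ n →
    (∑ S ∈ Finset.powersetCard k (Finset.Icc 1 n), (Polynomial.X : Polynomial ℚ) ^ (∑ s ∈ S, s))
        * qFact k * qFact (n - k) =
      X ^ (k + 1).choose 2 * qFact n := by
  intro n
  induction n with
  | zero =>
    intro k hk; interval_cases k
    simp [qFact]
  | succ n ih =>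
    intro k hk
    match k with
    | 0 =>
      simp [qFact, Nat.choose]
    | (j+1) =>
      have hins : Finset.Icc 1 (n+1) = insert (n+1) (Finset.Icc 1 n) := by
        ext x; simp; omega
      have hnm : (n+1) ∉ Finset.Icc 1 n := by simp
      rw [hins, Finset.powersetCard_succ_insert hnm,
        Finset.sum_union, Finset.sum_image (by
          intro S hS S' hS' hSS
          simp only [Finset.mem_coe, Finset.mem_powersetCard] at hS hS'
          have h1 : (n+1) ∉ S := fun h => hnm (hS.1 h)
          have h2 : (n+1) ∉ S' := fun h => hnm (hS'.1 h)
          rw [← Finset.erase_insert h1, ← Finset.erase_insert h2, hSS])]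
      · have hsum : ∀ S ∈ Finset.powersetCard j (Finset.Icc 1 n),
            (X : Polynomial ℚ) ^ (∑ s ∈ insert (n+1) S, s) = X^(n+1) * X ^ (∑ s ∈ S, s) := by
          intro S hS
          simp only [Finset.mem_powersetCard] at hS
          rw [Finset.sum_insert (fun h => hnm (hS.1 h)), pow_add]
        rw [Finset.sum_congr rfl hsum, ← Finset.mul_sum]
        set A := (∑ S ∈ Finset.powersetCard (j+1) (Finset.Icc 1 n), (X:Polynomial ℚ) ^ ∑ s ∈ S, s) with hA
        set B := (∑ S ∈ Finset.powersetCard j (Finset.Icc 1 n), (X:Polynomial ℚ) ^ ∑ s ∈ S, s) with hB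
        have ihj : B * qFact j * qFact (n - j) = X ^ (j+1).choose 2 * qFact n := ih j (by omega)
        by_cases hjn : j + 1 ≤ n
        · have ihj1 : A * qFact (j+1) * qFact (n - (j+1)) = X ^ (j+2).choose 2 * qFact n :=
            ih (j+1) hjn
          have e2 : n + 1 - (j+1) = n - j := by omega
          have e1 : qFact (n - j) = qFact (n - (j+1)) * qInt (n - j) := by
            rw [show n - j = (n - (j+1)) + 1 by omega, qFact_succ,
              show n - (j+1) + 1 = n - j by omega]
          have e3 : qFact (n - j) = qFact (n - j - 1) * qInt (n - j) := by
            rw [show n - j - 1 = n - (j+1) by omega]; exact e1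
          have expand : (A + X ^ (n+1) * B) * qFact (j+1) * qFact (n + 1 - (j+1))
              = X ^ (j+2).choose 2 * qFact n * qInt (n - j)
                + X ^ (n+1) * qInt (j+1) * (X ^ (j+1).choose 2 * qFact n) := by
            rw [e2, ← ihj1, ← ihj, e1, qFact_succ]
            ring
          rw [expand]
          have ch1 : (j+2).choose 2 = (j+1).choose 2 + (j+1) := by
            simp [Nat.choose_two_right]; ring_nf; omega
          rw [ch1, pow_add, qFact_succ (n)]
          have := qshift (n+1) (j+1) (by omega)
          calc X ^ (j+1).choose 2 * X ^ (j+1) * qFact n * qInt (n - j)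
                + X ^ (n+1) * qInt (j+1) * (X ^ (j+1).choose 2 * qFact n)
              = X ^ (j+1).choose 2 * qFact n *
                  (X ^ (j+1) * qInt (n + 1 - (j+1)) + X ^ (n+1) * qInt (j+1)) := by
                rw [e2]; ring
            _ = X ^ (j+1).choose 2 * qFact n * (X ^ (j+1) * qInt (n+1)) := by rw [this]
            _ = X ^ (j+1).choose 2 * X ^ (j+1) * (qFact n * qInt (n+1)) := by ring
        · have hj : j = n := by omega
          subst hj
          have hemp : Finset.powersetCard (j+1) (Finset.Icc 1 j) = ∅ := by
            apply Finset.powersetCard_eq_empty.2; simp [Nat.card_Icc]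
          rw [hA, hemp]
          simp only [Finset.sum_empty, zero_add]
          have h0 : qFact 0 = 1 := by simp [qFact]
          have ihj' : B * qFact j = X ^ (j + 1).choose 2 * qFact j := by
            simpa [Nat.sub_self, h0] using ihj
          have ch1 : (j + 2).choose 2 = (j + 1).choose 2 + (j + 1) := by
            simp [Nat.choose_two_right]; ring_nf; omega
          rw [show j + 1 - (j + 1) = 0 from by omega, h0, mul_one, ch1, qFact_succ j]
          linear_combination (X : Polynomial ℚ) ^ (j + 1) * qInt (j + 1) * ihj'
      · rw [Finset.disjoint_left]
        intro S hS hS2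
        simp only [Finset.mem_powersetCard, Finset.mem_image] at hS hS2
        obtain ⟨S', hS', rfl⟩ := hS2
        exact hnm (hS.1 (Finset.mem_insert_self _ _))

noncomputable def colSet {μ : YoungDiagram} (T : SYT μ) : Finset ℕ :=
  (Finset.univ.filter (fun c : μ.cells => 1 ≤ (c : ℕ × ℕ).1)).image (fun c => ((T.1 c : ℕ)))

section hook
variable {n k : ℕ} {μ : YoungDiagram} (hkn : k ≤ n)
  (hμ : μ.rowLens = (n - k + 1) :: List.replicate k 1)

include hkn hμ

lemma colCells_card :
    (Finset.univ.filter (fun c : μ.cells => 1 ≤ (c : ℕ × ℕ).1)).card = k := by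
  classical
  have : (μ.cells.filter (fun c => 1 ≤ c.1)) = (Finset.Icc 1 k) ×ˢ ({0} : Finset ℕ) := by
    ext ⟨i, j⟩
    simp only [Finset.mem_filter, YoungDiagram.mem_cells, mu_mem hμ, Finset.mem_product,
      Finset.mem_Icc, Finset.mem_singleton]
    omega
  rw [Finset.univ_eq_attach, Finset.filter_attach (fun c : ℕ × ℕ => 1 ≤ c.1) μ.cells,
    Finset.card_map, Finset.card_attach, this]
  simp [Nat.card_Icc]

lemma cell00 : ((0 : ℕ), (0 : ℕ)) ∈ μ.cells := by
  rw [YoungDiagram.mem_cells, mu_mem hμ]; left; omega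


lemma cell_snd_eq {c : ℕ × ℕ} (h : c ∈ μ.cells) (h1 : 1 ≤ c.1) : c.2 = 0 ∧ c.1 ≤ k := by
  have h2 := (mu_mem hμ c.1 c.2).1 (by rw [Prod.mk.eta, ← YoungDiagram.mem_cells]; exact h)
  omega

lemma colSet_subset (T : SYT μ) : colSet T ⊆ Finset.Icc 2 (n + 1) := by
  intro s hs
  obtain ⟨c, hc, hseq⟩ := Finset.mem_image.1 hs
  rw [Finset.mem_filter] at hc
  have hub : s ∈ Finset.Icc 1 μ.cells.card := hseq ▸ (T.1 c).2
  rw [mu_card hkn hμ] at hub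
  have hc2 : (c : ℕ × ℕ).2 = 0 := by
    have h2 := (mu_mem hμ (c : ℕ × ℕ).1 (c : ℕ × ℕ).2).1
      (by rw [Prod.mk.eta, ← YoungDiagram.mem_cells]; exact c.2)
    omega
  have hlt : (T.1 ⟨((0:ℕ),(0:ℕ)), cell00 hkn hμ⟩ : ℕ) < (T.1 c : ℕ) := by
    apply T.2.2
    right
    exact ⟨hc2.symm, hc.2⟩
  have h1 : (1 : ℕ) ≤ (T.1 ⟨((0:ℕ),(0:ℕ)), cell00 hkn hμ⟩ : ℕ) := by
    have := (T.1 ⟨((0:ℕ),(0:ℕ)), cell00 hkn hμ⟩).2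
    simp only [Finset.mem_Icc] at this
    exact this.1
  rw [hseq] at hlt
  simp only [Finset.mem_Icc] at hub ⊢
  omega

lemma colSet_card (T : SYT μ) : (colSet T).card = k := by
  rw [colSet, Finset.card_image_of_injOn, colCells_card hkn hμ]
  intro c _ c' _ h
  exact T.2.1.1 (Subtype.ext h)

lemma colSet_mem (T : SYT μ) : colSet T ∈ Finset.powersetCard k (Finset.Icc 2 (n + 1)) :=
  Finset.mem_powersetCard.2 ⟨colSet_subset hkn hμ T, colSet_card hkn hμ T⟩


lemma maj_eq (T : SYT μ) : maj T = ∑ s ∈ colSet T, (s - 1) := by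
  classical
  have hcard := mu_card hkn hμ
  have hset : ∀ (inst : DecidablePred (fun i => ∃ c c' : μ.cells, (T.1 c : ℕ) = i ∧
        (T.1 c' : ℕ) = i + 1 ∧ (c : ℕ × ℕ).1 < (c' : ℕ × ℕ).1)),
      (Finset.Icc 1 (μ.cells.card - 1)).filter
      (fun i => ∃ c c' : μ.cells, (T.1 c : ℕ) = i ∧ (T.1 c' : ℕ) = i + 1 ∧
        (c : ℕ × ℕ).1 < (c' : ℕ × ℕ).1) = (colSet T).image (fun s => s - 1) := by
    intro inst
    ext i
    simp only [Finset.mem_filter, Finset.mem_Icc, Finset.mem_image]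
    constructor
    · rintro ⟨⟨h1, h2⟩, c, c', hTc, hTc', hlt⟩
      refine ⟨i + 1, ?_, by omega⟩
      apply Finset.mem_image.2
      exact ⟨c', Finset.mem_filter.2 ⟨Finset.mem_univ _, by omega⟩, hTc'⟩
    · rintro ⟨s, hsmem, rfl⟩
      have hs2 : s ∈ Finset.Icc 2 (n + 1) := colSet_subset hkn hμ T hsmem
      rw [Finset.mem_Icc] at hs2
      obtain ⟨c', hc', hTc'⟩ := Finset.mem_image.1 hsmem
      rw [Finset.mem_filter] at hc'
      have hmem : (s - 1 : ℕ) ∈ Finset.Icc 1 μ.cells.card := by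
        rw [Finset.mem_Icc, hcard]; omega
      obtain ⟨c, hTc⟩ := T.2.1.2 ⟨s - 1, hmem⟩
      have hTcv : (T.1 c : ℕ) = s - 1 := by rw [hTc]
      refine ⟨⟨by omega, by omega⟩, c, c', hTcv, by omega, ?_⟩
      by_contra hge
      push_neg at hge
      have hc'1 : 1 ≤ (c' : ℕ × ℕ).1 := hc'.2
      have h1 : 1 ≤ (c : ℕ × ℕ).1 := le_trans hc'1 hge
      have e1 := cell_snd_eq hkn hμ c.2 h1
      have e2 := cell_snd_eq hkn hμ c'.2 hc'1
      rcases eq_or_lt_of_le hge with heq | hlt2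
      · have hcc : (c : ℕ × ℕ) = (c' : ℕ × ℕ) := by
          rw [Prod.ext_iff]; exact ⟨heq.symm, by rw [e1.1, e2.1]⟩
        have : c = c' := Subtype.ext hcc
        rw [this, hTc'] at hTcv
        omega
      · have := T.2.2 c' c (Or.inr ⟨by rw [e1.1, e2.1], hlt2⟩)
        omega
  rw [maj, hset]
  rw [Finset.sum_image]
  intro x hx y hy hxy
  have hx2 := colSet_subset hkn hμ T hx
  have hy2 := colSet_subset hkn hμ T hy
  rw [Finset.mem_Icc] at hx2 hy2
  have hxy2 : x - 1 = y - 1 := hxy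
  omega


lemma col_cell_mem (x : ℕ) (hx : x < k) : ((x + 1 : ℕ), (0 : ℕ)) ∈ μ.cells := by
  rw [YoungDiagram.mem_cells, mu_mem hμ]; right; omega

lemma row_cell_mem (x : ℕ) (hx : x < n - k + 1) : ((0 : ℕ), x) ∈ μ.cells := by
  rw [YoungDiagram.mem_cells, mu_mem hμ]; left; omega

lemma rowSet_card (T : SYT μ) :
    (Finset.Icc 1 (n + 1) \ colSet T).card = n - k + 1 := by
  rw [Finset.card_sdiff_of_subset ((colSet_subset hkn hμ T).trans (Finset.Icc_subset_Icc_left (by omega))),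
    Nat.card_Icc, colSet_card hkn hμ T]
  omega

lemma T_col (T : SYT μ) :
    (fun x : Fin k => (T.1 ⟨((x : ℕ) + 1, 0), col_cell_mem hkn hμ x x.2⟩ : ℕ))
      = ⇑((colSet T).orderEmbOfFin (colSet_card hkn hμ T)) := by
  apply Finset.orderEmbOfFin_unique
  · intro x
    exact Finset.mem_image.2 ⟨⟨((x : ℕ) + 1, 0), col_cell_mem hkn hμ x x.2⟩,
      Finset.mem_filter.2 ⟨Finset.mem_univ _, by simp⟩, rfl⟩
  · intro x y hxy
    apply T.2.2
    right
    refine ⟨rfl, ?_⟩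
    simpa using hxy

lemma T_row (T : SYT μ) :
    (fun x : Fin (n - k + 1) => (T.1 ⟨(0, (x : ℕ)), row_cell_mem hkn hμ x x.2⟩ : ℕ))
      = ⇑((Finset.Icc 1 (n + 1) \ colSet T).orderEmbOfFin (rowSet_card hkn hμ T)) := by
  apply Finset.orderEmbOfFin_unique
  · intro x
    rw [Finset.mem_sdiff]
    constructor
    · obtain ⟨hge, hle⟩ := Finset.mem_Icc.1 (T.1 ⟨(0, (x : ℕ)), row_cell_mem hkn hμ x x.2⟩).2
      exact Finset.mem_Icc.2 ⟨hge, hle.trans_eq (mu_card hkn hμ)⟩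
    · intro hmem
      obtain ⟨c', hc', hval⟩ := Finset.mem_image.1 hmem
      rw [Finset.mem_filter] at hc'
      have : T.1 c' = T.1 ⟨(0, (x : ℕ)), row_cell_mem hkn hμ x x.2⟩ := Subtype.ext hval
      have hcc := T.2.1.1 this
      rw [hcc] at hc'
      simp at hc'
  · intro x y hxy
    apply T.2.2
    left
    refine ⟨rfl, ?_⟩
    simpa using hxy

lemma colSet_inj (T T' : SYT μ) (h : colSet T = colSet T') : T = T' := by
  apply Subtype.ext
  funext c
  obtain ⟨⟨i, j⟩, hmem⟩ := c
  have hm := (mu_mem hμ i j).1 (YoungDiagram.mem_cells _ |>.1 hmem)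
  apply Subtype.ext
  match i with
  | 0 =>
    have hj : j < n - k + 1 := by omega
    have e1 := congrFun (T_row hkn hμ T) ⟨j, hj⟩
    have e2 := congrFun (T_row hkn hμ T') ⟨j, hj⟩
    simp only [h] at e1
    exact e1.trans e2.symm
  | (i' + 1) =>
    have hi : i' < k := by omega
    have hj : j = 0 := by omega
    subst hj
    have e1 := congrFun (T_col hkn hμ T) ⟨i', hi⟩
    have e2 := congrFun (T_col hkn hμ T') ⟨i', hi⟩
    simp only [h] at e1
    exact e1.trans e2.symm




lemma colSet_surj (S : Finset ℕ) (hS : S ∈ Finset.powersetCard k (Finset.Icc 2 (n + 1))) :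
    ∃ T : SYT μ, colSet T = S := by
  classical
  obtain ⟨hSsub, hScard⟩ := Finset.mem_powersetCard.1 hS
  set R := Finset.Icc 1 (n + 1) \ S with hRdef
  have hRcard : R.card = n - k + 1 := by
    rw [hRdef, Finset.card_sdiff_of_subset (hSsub.trans (Finset.Icc_subset_Icc_left (by omega))),
      Nat.card_Icc, hScard]
    omega
  have hcard := mu_card hkn hμ
  have hmemIcc : ∀ m : ℕ, m ∈ R ∨ m ∈ S → m ∈ Finset.Icc 1 μ.cells.card := by
    intro m hm
    rw [hcard]
    rcases hm with hm | hm
    · exact Finset.sdiff_subset hm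
    · exact Finset.Icc_subset_Icc_left (by omega) (hSsub hm)
  have cellprop : ∀ c : μ.cells, ((c : ℕ × ℕ).1 = 0 ∧ (c : ℕ × ℕ).2 < n - k + 1) ∨
      (1 ≤ (c : ℕ × ℕ).1 ∧ (c : ℕ × ℕ).1 ≤ k ∧ (c : ℕ × ℕ).2 = 0) := by
    intro c
    have h2 := (mu_mem hμ (c : ℕ × ℕ).1 (c : ℕ × ℕ).2).1
      (by rw [Prod.mk.eta, ← YoungDiagram.mem_cells]; exact c.2)
    omega
  have hSge : ∀ m ∈ S, 2 ≤ m := fun m hm => (Finset.mem_Icc.1 (hSsub hm)).1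
  have h1R : (1 : ℕ) ∈ R := by
    rw [hRdef, Finset.mem_sdiff, Finset.mem_Icc]
    exact ⟨⟨le_refl 1, by omega⟩, fun h => by have := hSge 1 h; omega⟩
  have hdisj : ∀ m : ℕ, m ∈ R → m ∈ S → False := by
    intro m h1 h2
    rw [hRdef, Finset.mem_sdiff] at h1
    exact h1.2 h2
  have hRle : ∀ x : Fin (n - k + 1), (x : ℕ) = 0 → R.orderEmbOfFin hRcard x ≤ 1 := by
    intro x hx
    have hx0 : x = ⟨0, by omega⟩ := Fin.ext hx
    rw [hx0, Finset.orderEmbOfFin_zero]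
    exact Finset.min'_le _ _ h1R
  have hSge2 : ∀ x : Fin k, 2 ≤ S.orderEmbOfFin hScard x :=
    fun x => hSge _ (Finset.orderEmbOfFin_mem S hScard x)
  refine ⟨⟨fun c => ⟨if h0 : (c : ℕ × ℕ).1 = 0
      then R.orderEmbOfFin hRcard ⟨(c : ℕ × ℕ).2, by have := cellprop c; omega⟩
      else S.orderEmbOfFin hScard ⟨(c : ℕ × ℕ).1 - 1, by have := cellprop c; omega⟩, by
        split_ifs with h0
        · exact hmemIcc _ (Or.inl (Finset.orderEmbOfFin_mem R hRcard _))
        · exact hmemIcc _ (Or.inr (Finset.orderEmbOfFin_mem S hScard _))⟩, ?_, ?_⟩, ?_⟩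
  · -- bijective
    rw [Fintype.bijective_iff_injective_and_card]
    constructor
    · intro c c' heq
      have hv := congrArg Subtype.val heq
      by_cases h0 : (c : ℕ × ℕ).1 = 0 <;> by_cases h0' : (c' : ℕ × ℕ).1 = 0
      · simp only [dif_pos h0, dif_pos h0'] at hv
        have hfin := (R.orderEmbOfFin hRcard).injective hv
        have h2 : (c : ℕ × ℕ).2 = (c' : ℕ × ℕ).2 := congrArg Fin.val hfin
        exact Subtype.ext (by rw [Prod.ext_iff]; exact ⟨by omega, h2⟩)
      · simp only [dif_pos h0, dif_neg h0'] at hv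
        exact (hdisj _ (hv ▸ Finset.orderEmbOfFin_mem R hRcard _)
          (Finset.orderEmbOfFin_mem S hScard _)).elim
      · simp only [dif_neg h0, dif_pos h0'] at hv
        exact (hdisj _ (hv.symm ▸ Finset.orderEmbOfFin_mem R hRcard _)
          (Finset.orderEmbOfFin_mem S hScard _)).elim
      · simp only [dif_neg h0, dif_neg h0'] at hv
        have hfin := (S.orderEmbOfFin hScard).injective hv
        have h2 : (c : ℕ × ℕ).1 - 1 = (c' : ℕ × ℕ).1 - 1 := congrArg Fin.val hfin
        have hc := cellprop c
        have hc' := cellprop c'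
        exact Subtype.ext (by rw [Prod.ext_iff]; constructor <;> omega)
    · simp only [Fintype.card_coe, Nat.card_Icc]
      omega
  · -- monotone
    intro c c' hcond
    rcases hcond with ⟨hfst, hsnd⟩ | ⟨hsnd, hfst⟩
    · -- same row
      have hc := cellprop c
      have hc' := cellprop c'
      have h0 : (c : ℕ × ℕ).1 = 0 := by omega
      have h0' : (c' : ℕ × ℕ).1 = 0 := by omega
      simp only [dif_pos h0, dif_pos h0']
      exact (R.orderEmbOfFin hRcard).strictMono (Fin.mk_lt_mk.2 hsnd)
    · -- same column
      have hc := cellprop c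
      have hc' := cellprop c'
      have h0' : ¬((c' : ℕ × ℕ).1 = 0) := by omega
      by_cases h0 : (c : ℕ × ℕ).1 = 0
      · simp only [dif_pos h0, dif_neg h0']
        have hc2 : (c : ℕ × ℕ).2 = 0 := by omega
        exact lt_of_le_of_lt (hRle _ hc2) (lt_of_lt_of_le one_lt_two (hSge2 _))
      · simp only [dif_neg h0, dif_neg h0']
        exact (S.orderEmbOfFin hScard).strictMono (Fin.mk_lt_mk.2 (by omega))
  · -- colSet = S
    apply Finset.eq_of_subset_of_card_le
    · intro s hs
      obtain ⟨c, hc, hval⟩ := Finset.mem_image.1 hs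
      rw [Finset.mem_filter] at hc
      have h0 : ¬((c : ℕ × ℕ).1 = 0) := by omega
      rw [← hval]
      simp only [dif_neg h0]
      exact Finset.orderEmbOfFin_mem S hScard _
    · rw [colSet_card hkn hμ, hScard]

lemma sum_maj_eq :
    ∑ T : SYT μ, (Polynomial.X : Polynomial ℚ) ^ maj T
      = ∑ S ∈ Finset.powersetCard k (Finset.Icc 2 (n + 1)),
          (Polynomial.X : Polynomial ℚ) ^ (∑ s ∈ S, (s - 1)) := by
  apply Finset.sum_bij (fun T _ => colSet T)
  · intro T _
    exact colSet_mem hkn hμ T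
  · intro T _ T' _ h
    exact colSet_inj hkn hμ T T' h
  · intro S hS
    obtain ⟨T, hT⟩ := colSet_surj hkn hμ S hS
    exact ⟨T, Finset.mem_univ _, hT⟩
  · intro T _
    rw [maj_eq hkn hμ T]

end hook

lemma shift_sum (n k : ℕ) :
    (∑ S ∈ Finset.powersetCard k (Finset.Icc 2 (n + 1)),
        (Polynomial.X : Polynomial ℚ) ^ (∑ s ∈ S, (s - 1)))
      = ∑ D ∈ Finset.powersetCard k (Finset.Icc 1 n),
          (Polynomial.X : Polynomial ℚ) ^ (∑ d ∈ D, d) := by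
  classical
  apply Finset.sum_bij (fun S _ => S.image (fun s => s - 1))
  · intro S hS
    rw [Finset.mem_powersetCard] at hS ⊢
    constructor
    · intro d hd
      obtain ⟨s, hs, rfl⟩ := Finset.mem_image.1 hd
      have := Finset.mem_Icc.1 (hS.1 hs)
      rw [Finset.mem_Icc]
      omega
    · rw [Finset.card_image_of_injOn, hS.2]
      intro x hx y hy hxy
      have hx2 := Finset.mem_Icc.1 (hS.1 hx)
      have hy2 := Finset.mem_Icc.1 (hS.1 hy)
      have hxy2 : x - 1 = y - 1 := hxy
      omega
  · intro S hS S' hS' h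
    rw [Finset.mem_powersetCard] at hS hS'
    ext a
    constructor <;> intro ha
    · have hmem : a - 1 ∈ S'.image (fun s => s - 1) := h ▸ Finset.mem_image_of_mem _ ha
      obtain ⟨b, hb, hba⟩ := Finset.mem_image.1 hmem
      have h2a := Finset.mem_Icc.1 (hS.1 ha)
      have h2b := Finset.mem_Icc.1 (hS'.1 hb)
      have : b = a := by omega
      rwa [← this]
    · have hmem : a - 1 ∈ S.image (fun s => s - 1) := h ▸ Finset.mem_image_of_mem _ ha
      obtain ⟨b, hb, hba⟩ := Finset.mem_image.1 hmem
      have h2a := Finset.mem_Icc.1 (hS'.1 ha)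
      have h2b := Finset.mem_Icc.1 (hS.1 hb)
      have : b = a := by omega
      rwa [← this]
  · intro D hD
    rw [Finset.mem_powersetCard] at hD
    refine ⟨D.image (fun d => d + 1), Finset.mem_powersetCard.2 ⟨?_, ?_⟩, ?_⟩
    · intro s hs
      obtain ⟨d, hd, rfl⟩ := Finset.mem_image.1 hs
      have := Finset.mem_Icc.1 (hD.1 hd)
      rw [Finset.mem_Icc]
      omega
    · rw [Finset.card_image_of_injective _ (fun x y h => by omega), hD.2]
    · rw [Finset.image_image]
      have h1 : Finset.image ((fun s => s - 1) ∘ fun d => d + 1) D = Finset.image id D :=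
        Finset.image_congr (fun d _ => by simp)
      rw [h1, Finset.image_id]
  · intro S hS
    rw [Finset.mem_powersetCard] at hS
    rw [Finset.sum_image]
    intro x hx y hy hxy
    have hx2 := Finset.mem_Icc.1 (hS.1 hx)
    have hy2 := Finset.mem_Icc.1 (hS.1 hy)
    have hxy2 : x - 1 = y - 1 := hxy
    omega

/-- For the hook partition `λ = (n - k + 1, 1^k)` of `n`,
`∑_{T ∈ SYT(λ)} q^{maj T} = q^{C(k+1,2)} · C(n,k)_q` (stated multiplied through by
`[k]_q! [n-k]_q!`). -/
theorem syt_maj_hook_shape (n k : ℕ) (hk : 1 ≤ n - k + 1) (hkn : k ≤ n - 1)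
    (μ : YoungDiagram) (hμ : μ.rowLens = (n - k + 1) :: List.replicate k 1) :
    (∑ T : SYT μ, (Polynomial.X : Polynomial ℚ) ^ maj T) * qFact k * qFact (n - k) =
      (Polynomial.X : Polynomial ℚ) ^ (k + 1).choose 2 * qFact n := by
  have hkn' : k ≤ n := by omega
  rw [sum_maj_eq hkn' hμ, shift_sum n k, key_identity n k hkn']
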